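/- Let N ≥ 1 and let a be a symmetric positive definite N × N matrix with real entries. Then there exists a unique vector (z_1, …, z_N) with all z_i in the open interval (0, 1) satisfying the Nahm equations 1 - z_i = Π_{j=1}^N z_j^{a_{ij}} for i = 1, …, N (real powers z_j^{a_{ij}} = exp(a_{ij} log z_j)). -/

import Mathlib

open Real Set

noncomputable def nahmG : ℝ → ℝ := fun t => -Real.log (1 - Real.exp t)

lemma nahmG_contAt {t : ℝ} (ht : t < 0) : ContinuousAt nahmG t := by
  have h1 : (1 : ℝ) - Real.exp t ≠ 0 := by
    have := Real.exp_lt_one_iff.2 ht; linarith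
  have : ContinuousAt (fun t => -Real.log (1 - Real.exp t)) t :=
    (ContinuousAt.log (f := fun t => 1 - Real.exp t) (by fun_prop) h1).neg
  exact this

lemma nahmG_nonneg {t : ℝ} (ht : t < 0) : 0 ≤ nahmG t := by
  have h1 : Real.exp t < 1 := Real.exp_lt_one_iff.2 ht
  have h2 : 0 < Real.exp t := Real.exp_pos t
  have : Real.log (1 - Real.exp t) ≤ 0 := Real.log_nonpos (by linarith) (by linarith)
  simp only [nahmG]; linarith

lemma nahmG_mono {t s : ℝ} (hts : t ≤ s) (hs : s < 0) : nahmG t ≤ nahmG s := by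
  have h1 : Real.exp s < 1 := Real.exp_lt_one_iff.2 hs
  have h2 : Real.exp t ≤ Real.exp s := Real.exp_le_exp.2 hts
  have : Real.log (1 - Real.exp s) ≤ Real.log (1 - Real.exp t) :=
    Real.log_le_log (by linarith) (by linarith)
  simp only [nahmG]; linarith

lemma nahmG_measurable : Measurable nahmG :=
  (Real.measurable_log.comp (by fun_prop)).neg

lemma nahmG_intble {u v : ℝ} (hu : u < 0) (hv : v < 0) :
    IntervalIntegrable nahmG MeasureTheory.volume u v := by
  apply ContinuousOn.intervalIntegrable
  intro x hx
  have hx0 : x < 0 := lt_of_le_of_lt hx.2 (sup_lt_iff.2 ⟨hu, hv⟩)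
  exact (nahmG_contAt hx0).continuousWithinAt

noncomputable def nahmGG : ℝ → ℝ := fun u => ∫ t in (-1:ℝ)..u, nahmG t

lemma nahmGG_hasDerivAt {u : ℝ} (hu : u < 0) : HasDerivAt nahmGG (nahmG u) u := by
  exact intervalIntegral.integral_hasDerivAt_right (nahmG_intble (by norm_num) hu)
    (nahmG_measurable.stronglyMeasurable.stronglyMeasurableAtFilter)
    (nahmG_contAt hu)

-- bound: g t ≤ 2 exp t for t ≤ -1
lemma nahmG_le {t : ℝ} (ht : t ≤ -1) : nahmG t ≤ 2 * Real.exp t := by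
  have h2 : Real.exp t ≤ Real.exp (-1) := Real.exp_le_exp.2 ht
  have he : Real.exp (-1) ≤ 1/2 := by
    rw [Real.exp_neg]
    rw [inv_le_comm₀ (Real.exp_pos 1) (by norm_num)]
    calc (1/2 : ℝ)⁻¹ = 2 := by norm_num
    _ ≤ Real.exp 1 := by have := Real.add_one_le_exp 1; linarith
  have hlt : Real.exp t ≤ 1/2 := le_trans h2 he
  have hpos : 0 < 1 - Real.exp t := by linarith
  have key : Real.log (1/(1 - Real.exp t)) ≤ 1/(1 - Real.exp t) - 1 :=
    Real.log_le_sub_one_of_pos (by positivity)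
  rw [Real.log_div one_ne_zero (ne_of_gt hpos), Real.log_one] at key
  have : nahmG t ≤ 1/(1 - Real.exp t) - 1 := by simp only [nahmG]; linarith
  have h3 : 1/(1 - Real.exp t) - 1 = Real.exp t / (1 - Real.exp t) := by
    field_simp
    ring
  rw [h3] at this
  refine this.trans ?_
  rw [div_le_iff₀ hpos]
  nlinarith [Real.exp_pos t]

lemma nahmGG_ge {u : ℝ} (hu : u < 0) : -1 ≤ nahmGG u := by
  rcases le_or_gt (-1) u with h | h
  · have : 0 ≤ nahmGG u := by
      apply intervalIntegral.integral_nonneg h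
      intro x hx
      exact nahmG_nonneg (lt_of_le_of_lt hx.2 hu)
    linarith
  · have hsymm : nahmGG u = -∫ t in u..(-1:ℝ), nahmG t := by
      rw [nahmGG, intervalIntegral.integral_symm]
    have hle : ∫ t in u..(-1:ℝ), nahmG t ≤ ∫ t in u..(-1:ℝ), 2 * Real.exp t := by
      apply intervalIntegral.integral_mono_on h.le (nahmG_intble hu (by norm_num))
      · exact (Continuous.intervalIntegrable (by fun_prop) _ _)
      · intro x hx; exact nahmG_le hx.2
    have hcomp : ∫ t in u..(-1:ℝ), 2 * Real.exp t = 2 * (Real.exp (-1) - Real.exp u) := by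
      rw [intervalIntegral.integral_const_mul, integral_exp]
    have he : Real.exp (-1) ≤ 1/2 := by
      rw [Real.exp_neg, inv_le_comm₀ (Real.exp_pos 1) (by norm_num)]
      calc (1/2 : ℝ)⁻¹ = 2 := by norm_num
      _ ≤ Real.exp 1 := by have := Real.add_one_le_exp 1; linarith
    have := Real.exp_pos u
    rw [hsymm]
    linarith

lemma nahmG_large {R : ℝ} (hR : 0 ≤ R) :
    R + 1 ≤ nahmG (-min (1/2) (Real.exp (-(R+1)))) := by
  set e2 := min (1/2) (Real.exp (-(R+1))) with he2
  have h0 : 0 < e2 := lt_min (by norm_num) (Real.exp_pos _)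
  have h1 : 1 - Real.exp (-e2) ≤ Real.exp (-(R+1)) := by
    have := Real.add_one_le_exp (-e2)
    have : 1 - e2 ≤ Real.exp (-e2) := by linarith
    have h2 : e2 ≤ Real.exp (-(R+1)) := min_le_right _ _
    linarith
  have hpos : 0 < 1 - Real.exp (-e2) := by
    have : Real.exp (-e2) < 1 := Real.exp_lt_one_iff.2 (by linarith)
    linarith
  have := Real.log_le_log hpos h1
  rw [Real.log_exp] at this
  simp only [nahmG]
  linarith


variable {N : ℕ}

noncomputable def nahmS (a : Matrix (Fin N) (Fin N) ℝ) (u : Fin N → ℝ) : ℝ :=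
  ∑ i, ∑ j, a i j * u i * u j

lemma nahmS_slice (a : Matrix (Fin N) (Fin N) ℝ) (hsym : a.IsSymm)
    (u : Fin N → ℝ) (i : Fin N) (t : ℝ) :
    nahmS a (Function.update u i t) =
      a i i * t^2 + 2 * (∑ j ∈ Finset.univ.erase i, a i j * u j) * t +
      ∑ j ∈ Finset.univ.erase i, ∑ k ∈ Finset.univ.erase i, a j k * u j * u k := by
  set v := Function.update u i t with hv
  set e := Finset.univ.erase i with he
  have hvi : v i = t := Function.update_self i t u
  have hvj : ∀ j ∈ e, v j = u j := fun j hj =>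
    Function.update_of_ne (Finset.ne_of_mem_erase hj) t u
  have h1 : nahmS a v =
      ∑ j ∈ e, (∑ k ∈ e, a j k * v j * v k + a j i * v j * v i) +
      (∑ k ∈ e, a i k * v i * v k + a i i * v i * v i) := by
    simp only [nahmS]
    rw [← Finset.sum_erase_add Finset.univ _ (Finset.mem_univ i), ← he]
    congr 1
    · refine Finset.sum_congr rfl fun j _ => ?_
      rw [← Finset.sum_erase_add Finset.univ _ (Finset.mem_univ i), ← he]
    · rw [← Finset.sum_erase_add Finset.univ _ (Finset.mem_univ i), ← he]
  rw [h1, hvi]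
  have h2 : ∑ j ∈ e, (∑ k ∈ e, a j k * v j * v k + a j i * v j * t) =
      (∑ j ∈ e, ∑ k ∈ e, a j k * u j * u k) + (∑ j ∈ e, a i j * u j) * t := by
    rw [Finset.sum_add_distrib]
    congr 1
    · refine Finset.sum_congr rfl fun j hj => ?_
      exact Finset.sum_congr rfl fun k hk => by rw [hvj j hj, hvj k hk]
    · rw [Finset.sum_mul]
      refine Finset.sum_congr rfl fun j hj => ?_
      rw [hvj j hj, hsym.apply i j]
  have h3 : ∑ k ∈ e, a i k * t * v k = (∑ j ∈ e, a i j * u j) * t := by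
    rw [Finset.sum_mul]
    exact Finset.sum_congr rfl fun k hk => by rw [hvj k hk]; ring
  rw [h2, h3]
  ring



lemma nahmS_eq_dot {N : ℕ} (a : Matrix (Fin N) (Fin N) ℝ) (u : Fin N → ℝ) :
    nahmS a u = dotProduct u (a.mulVec u) := by
  simp only [nahmS, dotProduct, Matrix.mulVec, Finset.mul_sum]
  exact Finset.sum_congr rfl fun i _ => Finset.sum_congr rfl fun j _ => by ring

lemma nahmS_pos {N : ℕ} (a : Matrix (Fin N) (Fin N) ℝ) (hpos : a.PosDef)
    {u : Fin N → ℝ} (hu : u ≠ 0) : 0 < nahmS a u := by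
  rw [nahmS_eq_dot]; exact hpos.dotProduct_mulVec_pos hu

lemma nahm_unique {N : ℕ} (a : Matrix (Fin N) (Fin N) ℝ) (hpos : a.PosDef)
    (u v : Fin N → ℝ) (hu : ∀ i, u i < 0) (hv : ∀ i, v i < 0)
    (hequ : ∀ i, (∑ j, a i j * u j) + nahmG (u i) = 0)
    (heqv : ∀ i, (∑ j, a i j * v j) + nahmG (v i) = 0) : u = v := by
  by_contra hne
  have hd : u - v ≠ 0 := sub_ne_zero.2 hne
  have hSpos : 0 < nahmS a (u - v) := nahmS_pos a hpos hd
  have hcalc : nahmS a (u - v) =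
      ∑ i, (u i - v i) * ((∑ j, a i j * u j) - (∑ j, a i j * v j)) := by
    simp only [nahmS, Pi.sub_apply]
    refine Finset.sum_congr rfl fun i _ => ?_
    rw [← Finset.sum_sub_distrib, Finset.mul_sum]
    exact Finset.sum_congr rfl fun j _ => by ring
  have hterm : ∀ i, (u i - v i) * ((∑ j, a i j * u j) - (∑ j, a i j * v j)) ≤ 0 := by
    intro i
    have h1 : (∑ j, a i j * u j) = -nahmG (u i) := by have := hequ i; linarith
    have h2 : (∑ j, a i j * v j) = -nahmG (v i) := by have := heqv i; linarith
    rw [h1, h2]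
    rcases le_total (u i) (v i) with h | h
    · have := nahmG_mono h (hv i); nlinarith
    · have := nahmG_mono h (hu i); nlinarith
  have : nahmS a (u - v) ≤ 0 := by
    rw [hcalc]; exact Finset.sum_nonpos fun i _ => hterm i
  linarith

lemma nahmS_smul {N : ℕ} (a : Matrix (Fin N) (Fin N) ℝ) (c : ℝ) (u : Fin N → ℝ) :
    nahmS a (c • u) = c^2 * nahmS a u := by
  simp only [nahmS, Pi.smul_apply, smul_eq_mul, Finset.mul_sum]
  exact Finset.sum_congr rfl fun i _ => Finset.sum_congr rfl fun j _ => by ring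

lemma nahmS_continuous {N : ℕ} (a : Matrix (Fin N) (Fin N) ℝ) : Continuous (nahmS a) := by
  unfold nahmS; fun_prop

lemma nahmS_lower {N : ℕ} (hN : 1 ≤ N) (a : Matrix (Fin N) (Fin N) ℝ) (hpos : a.PosDef) :
    ∃ m > 0, ∀ u : Fin N → ℝ, m * ‖u‖^2 ≤ nahmS a u := by
  haveI : Nonempty (Fin N) := ⟨⟨0, hN⟩⟩
  have hne : (Metric.sphere (0 : Fin N → ℝ) 1).Nonempty :=
    NormedSpace.sphere_nonempty.2 zero_le_one
  obtain ⟨v₀, hv₀, hmin⟩ := (isCompact_sphere (0 : Fin N → ℝ) 1).exists_isMinOn hne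
    ((nahmS_continuous a).continuousOn)
  have hv₀norm : ‖v₀‖ = 1 := by simpa using hv₀
  have hv₀ne : v₀ ≠ 0 := by intro h; rw [h] at hv₀norm; simp at hv₀norm
  refine ⟨nahmS a v₀, nahmS_pos a hpos hv₀ne, fun u => ?_⟩
  rcases eq_or_ne u 0 with rfl | hu
  · simp [nahmS]
  · have hnu : (0:ℝ) < ‖u‖ := norm_pos_iff.2 hu
    have hw : ‖u‖⁻¹ • u ∈ Metric.sphere (0 : Fin N → ℝ) 1 := by
      simp [norm_smul, abs_of_pos (inv_pos.2 hnu), inv_mul_cancel₀ hnu.ne']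
    have h1 : nahmS a v₀ ≤ nahmS a (‖u‖⁻¹ • u) := hmin hw
    rw [nahmS_smul a _ u] at h1
    have h2 : nahmS a v₀ * ‖u‖^2 ≤ (‖u‖⁻¹)^2 * nahmS a u * ‖u‖^2 := by
      nlinarith [sq_nonneg ‖u‖]
    calc nahmS a v₀ * ‖u‖^2 ≤ (‖u‖⁻¹)^2 * nahmS a u * ‖u‖^2 := h2
      _ = nahmS a u := by field_simp
set_option maxHeartbeats 1000000 in
lemma nahm_exists {N : ℕ} (hN : 1 ≤ N) (a : Matrix (Fin N) (Fin N) ℝ)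
    (hsym : a.IsSymm) (hpos : a.PosDef) :
    ∃ u : Fin N → ℝ, (∀ i, u i < 0) ∧ ∀ i, (∑ j, a i j * u j) + nahmG (u i) = 0 := by
  obtain ⟨m, hm, hmS⟩ := nahmS_lower hN a hpos
  set T : ℝ := ∑ i, ∑ j, a i j with hT
  set M : ℝ := 1 + Real.sqrt (2 * (N + |T| + 2) / m) with hM
  have hsq : 0 ≤ Real.sqrt (2 * (N + |T| + 2) / m) := Real.sqrt_nonneg _
  have hM1 : 1 ≤ M := by simp only [hM]; linarith
  have hMsq : 2 * (↑N + |T| + 2) ≤ m * M^2 := by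
    have harg : (0:ℝ) ≤ 2 * (N + |T| + 2) / m := by positivity
    have h1 : Real.sqrt (2 * (N + |T| + 2) / m) ^ 2 = 2 * (N + |T| + 2) / m :=
      Real.sq_sqrt harg
    have h2 : Real.sqrt (2 * (N + |T| + 2) / m) ^ 2 ≤ M ^ 2 := by nlinarith
    rw [h1] at h2
    rw [div_le_iff₀ hm] at h2 <;> nlinarith
  set Abd : ℝ := ∑ i, ∑ j, |a i j| with hAbdDef
  have hAbd : 0 ≤ Abd := Finset.sum_nonneg fun i _ => Finset.sum_nonneg fun j _ => abs_nonneg _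
  have hAbd_ge : ∀ i : Fin N, (∑ j, |a i j|) ≤ Abd := fun i =>
    Finset.single_le_sum (f := fun i => ∑ j, |a i j|)
      (fun i _ => Finset.sum_nonneg fun j _ => abs_nonneg _) (Finset.mem_univ i)
  set R : ℝ := 2 * M * Abd with hR
  have hR0 : 0 ≤ R := by positivity
  set ε₂ : ℝ := min (1/2) (Real.exp (-(R+1))) with hε₂
  have hε₂pos : 0 < ε₂ := lt_min (by norm_num) (Real.exp_pos _)
  have hε₂le : ε₂ ≤ 1/2 := min_le_left _ _
  set ε : ℝ := ε₂ / 2 with hε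
  have hεpos : 0 < ε := by positivity
  have hεlt : ε < ε₂ := by simp only [hε]; linarith
  have hεM : ε < 1 := by simp only [hε]; linarith
  clear_value T M Abd R ε₂ ε
  set K : Set (Fin N → ℝ) := Set.univ.pi (fun _ => Icc (-M) (-ε)) with hK
  have hKc : IsCompact K := isCompact_univ_pi fun i => isCompact_Icc
  have hu₀K : (fun _ => (-1:ℝ)) ∈ K := by
    intro i _
    refine ⟨?_, ?_⟩
    · show -M ≤ -1; linarith
    · show (-1:ℝ) ≤ -ε; linarith
  have hKne : K.Nonempty := ⟨fun _ => -1, hu₀K⟩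
  set F : (Fin N → ℝ) → ℝ := fun w => (1/2) * nahmS a w + ∑ i, nahmGG (w i) with hF
  have hmemK : ∀ w ∈ K, ∀ i : Fin N, w i ∈ Icc (-M) (-ε) := by
    intro w hw i; exact hw i (Set.mem_univ i)
  have hFc : ContinuousOn F K := by
    apply ContinuousOn.add (continuous_const.mul (nahmS_continuous a)).continuousOn
    apply continuousOn_finset_sum
    intro i _
    intro w hw
    have hwi : w i < 0 := lt_of_le_of_lt (hmemK w hw i).2 (by linarith)
    have h1 : ContinuousAt nahmGG (w i) := (nahmGG_hasDerivAt hwi).continuousAt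
    have h2 : ContinuousAt (fun v : Fin N → ℝ => v i) w := (continuous_apply i).continuousAt
    show ContinuousWithinAt (nahmGG ∘ (fun v : Fin N → ℝ => v i)) K w
    exact (ContinuousAt.comp (g := nahmGG) (f := fun v : Fin N → ℝ => v i) (x := w) h1 h2).continuousWithinAt
  obtain ⟨u, huK, humin⟩ := hKc.exists_isMinOn hKne hFc
  have huIcc := hmemK u huK
  have huneg : ∀ i, u i < 0 := fun i => lt_of_le_of_lt (huIcc i).2 (by linarith)
  have hubd : ∀ i, |u i| ≤ M := by
    intro i
    have := (huIcc i).1; have := (huIcc i).2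
    rw [abs_le]; constructor <;> linarith
  -- value at the constant -1 vector
  have hGneg1 : nahmGG (-1) = 0 := intervalIntegral.integral_same
  have hFu₀ : F (fun _ => -1) = (1/2) * T := by
    simp only [hF, hGneg1, Finset.sum_const, smul_zero, add_zero]
    congr 1
    simp only [nahmS, hT]
    exact Finset.sum_congr rfl fun i _ => Finset.sum_congr rfl fun j _ => by ring
  have hFumin : F u ≤ (1/2) * T := hFu₀ ▸ humin hu₀K
  have hFval : F u = (1/2) * nahmS a u + ∑ i, nahmGG (u i) := rfl
  -- no coordinate equals -M
  have hnotM : ∀ i, u i ≠ -M := by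
    intro i hi
    have hnormM : M ≤ ‖u‖ := by
      have h1 : ‖u i‖ ≤ ‖u‖ := norm_le_pi_norm u i
      rw [Real.norm_eq_abs, hi, abs_neg, abs_of_pos (by linarith : (0:ℝ) < M)] at h1
      exact h1
    have hS : m * M^2 ≤ nahmS a u := by
      refine le_trans ?_ (hmS u)
      have : M^2 ≤ ‖u‖^2 := by nlinarith [norm_nonneg u]
      nlinarith
    have hGsum : -(N:ℝ) ≤ ∑ i, nahmGG (u i) := by
      calc -(N:ℝ) = ∑ _i : Fin N, (-1 : ℝ) := by simp
      _ ≤ ∑ i, nahmGG (u i) := Finset.sum_le_sum fun i _ => nahmGG_ge (huneg i)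
    have : (1/2) * (m * M^2) - N ≤ F u := by rw [hFval]; linarith
    have hTabs : T ≤ |T| := le_abs_self T
    have hTabs0 : 0 ≤ |T| := abs_nonneg T
    linarith
  -- slice function setup
  have hslice : ∀ (i : Fin N) (t : ℝ), F (Function.update u i t) =
      (a i i / 2) * t^2 + (∑ j ∈ Finset.univ.erase i, a i j * u j) * t + nahmGG t +
      ((1/2) * ∑ j ∈ Finset.univ.erase i, ∑ k ∈ Finset.univ.erase i, a j k * u j * u k +
        ∑ j ∈ Finset.univ.erase i, nahmGG (u j)) := by
    intro i t
    have hGsum : ∑ j, nahmGG (Function.update u i t j) =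
        (∑ j ∈ Finset.univ.erase i, nahmGG (u j)) + nahmGG t := by
      rw [← Finset.sum_erase_add Finset.univ _ (Finset.mem_univ i)]
      congr 1
      · exact Finset.sum_congr rfl fun j hj => by
          rw [Function.update_of_ne (Finset.ne_of_mem_erase hj)]
      · rw [Function.update_self]
    simp only [hF, nahmS_slice a hsym u i t, hGsum]
    ring
  have hderiv : ∀ (i : Fin N) (t : ℝ), t < 0 →
      HasDerivAt (fun s => F (Function.update u i s))
        (a i i * t + (∑ j ∈ Finset.univ.erase i, a i j * u j) + nahmG t) t := by
    intro i t ht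
    have heq : (fun s => F (Function.update u i s)) =
        (fun s => (a i i / 2) * s^2 + (∑ j ∈ Finset.univ.erase i, a i j * u j) * s + nahmGG s +
        ((1/2) * ∑ j ∈ Finset.univ.erase i, ∑ k ∈ Finset.univ.erase i, a j k * u j * u k +
          ∑ j ∈ Finset.univ.erase i, nahmGG (u j))) := funext fun s => hslice i s
    rw [heq]
    have h1 : HasDerivAt (fun s : ℝ => (a i i / 2) * s^2) (a i i / 2 * (2 * t)) t := by
      simpa using (hasDerivAt_pow 2 t).const_mul (a i i / 2)
    have h2 : HasDerivAt (fun s : ℝ => (∑ j ∈ Finset.univ.erase i, a i j * u j) * s)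
        (∑ j ∈ Finset.univ.erase i, a i j * u j) t := by
      simpa using (hasDerivAt_id t).const_mul (∑ j ∈ Finset.univ.erase i, a i j * u j)
    have h3 := nahmGG_hasDerivAt ht
    have := ((h1.add h2).add h3).add_const
      ((1/2) * ∑ j ∈ Finset.univ.erase i, ∑ k ∈ Finset.univ.erase i, a j k * u j * u k +
        ∑ j ∈ Finset.univ.erase i, nahmGG (u j))
    rw [show a i i * t = a i i / 2 * (2 * t) by ring]
    exact this
  -- bound on the affine part of the derivative
  have hcbd : ∀ (i : Fin N) (t : ℝ), |t| ≤ 1 →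
      -R ≤ a i i * t + (∑ j ∈ Finset.univ.erase i, a i j * u j) := by
    intro i t ht
    have h1 : |a i i * t| ≤ |a i i| := by
      rw [abs_mul]
      nlinarith [abs_nonneg (a i i), abs_nonneg t]
    have h2 : |∑ j ∈ Finset.univ.erase i, a i j * u j| ≤ M * (∑ j ∈ Finset.univ.erase i, |a i j|) := by
      refine le_trans (Finset.abs_sum_le_sum_abs _ _) ?_
      rw [Finset.mul_sum]
      refine Finset.sum_le_sum fun j _ => ?_
      rw [abs_mul]
      have := hubd j
      nlinarith [abs_nonneg (a i j), abs_nonneg (u j)]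
    have h3 : (∑ j ∈ Finset.univ.erase i, |a i j|) ≤ ∑ j, |a i j| :=
      Finset.sum_le_sum_of_subset_of_nonneg (Finset.erase_subset i _)
        (fun j _ _ => abs_nonneg _)
    have h4 : |a i i| ≤ ∑ j, |a i j| :=
      Finset.single_le_sum (f := fun j => |a i j|) (fun j _ => abs_nonneg _) (Finset.mem_univ i)
    have h5 := hAbd_ge i
    have := abs_le.1 h1
    have := abs_le.1 h2
    simp only [hR]
    nlinarith
  -- nahmG is large at -ε₂
  have hGlarge : R + 1 ≤ nahmG (-ε₂) := by rw [hε₂]; exact nahmG_large hR0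
  -- update stays in K
  have hupdK : ∀ (i : Fin N) (t : ℝ), t ∈ Icc (-M) (-ε) → Function.update u i t ∈ K := by
    intro i t ht j _
    rcases eq_or_ne j i with rfl | hji
    · rw [Function.update_self]; exact ht
    · rw [Function.update_of_ne hji]; exact huIcc j
  -- no coordinate equals -ε
  have hnotε : ∀ i, u i ≠ -ε := by
    intro i hi
    set φ := fun s => F (Function.update u i s) with hφ
    have hmono : StrictMonoOn φ (Icc (-ε₂) (-ε)) := by
      apply strictMonoOn_of_deriv_pos (convex_Icc _ _)
      · intro s hs
        have hs0 : s < 0 := lt_of_le_of_lt hs.2 (by linarith)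
        exact (hderiv i s hs0).continuousAt.continuousWithinAt
      · intro s hs
        rw [interior_Icc] at hs
        have hs0 : s < 0 := lt_trans hs.2 (by linarith)
        rw [(hderiv i s hs0).deriv]
        have hsabs : |s| ≤ 1 := by
          rw [abs_le]; constructor <;> nlinarith [hs.1, hs.2]
        have h1 := hcbd i s hsabs
        have h2 : nahmG (-ε₂) ≤ nahmG s := nahmG_mono (by nlinarith [hs.1]) hs0
        nlinarith
    have hlt : φ (-ε₂) < φ (-ε) := by
      apply hmono ⟨le_refl _, by linarith⟩ ⟨by linarith, le_refl _⟩
      linarith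
    have hφε : φ (-ε) = F u := by rw [hφ]; simp only [← hi, Function.update_eq_self]
    have hmem : Function.update u i (-ε₂) ∈ K :=
      hupdK i (-ε₂) ⟨by simp only [neg_le_neg_iff]; linarith, by simp only [neg_le_neg_iff]; linarith⟩
    have h6 : F u ≤ φ (-ε₂) := humin hmem
    rw [hφε] at hlt
    exact absurd (lt_of_le_of_lt h6 hlt) (lt_irrefl _)
  -- interior minimum gives the equation
  refine ⟨u, huneg, fun i => ?_⟩
  have hlt1 : -M < u i := lt_of_le_of_ne (huIcc i).1 (Ne.symm (hnotM i))
  have hlt2 : u i < -ε := lt_of_le_of_ne (huIcc i).2 (hnotε i)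
  have hloc : IsLocalMin (fun s => F (Function.update u i s)) (u i) := by
    have hnb : Icc (-M) (-ε) ∈ nhds (u i) := Icc_mem_nhds hlt1 hlt2
    refine Filter.eventually_of_mem hnb fun t ht => ?_
    have h1 : F u ≤ F (Function.update u i t) := humin (hupdK i t ht)
    simpa [Function.update_eq_self] using h1
  have hEq := hloc.hasDerivAt_eq_zero (hderiv i (u i) (huneg i))
  have hsum : (∑ j, a i j * u j) =
      (∑ j ∈ Finset.univ.erase i, a i j * u j) + a i i * u i := by
    rw [← Finset.sum_erase_add Finset.univ _ (Finset.mem_univ i)]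
  rw [hsum]
  linarith [hEq]
lemma nahm_translate {N : ℕ} (a : Matrix (Fin N) (Fin N) ℝ) (w : Fin N → ℝ)
    (hw : ∀ i, w i ∈ Set.Ioo (0:ℝ) 1) (heq : ∀ i, 1 - w i = ∏ j, w j ^ a i j) :
    ∀ i, (∑ j, a i j * Real.log (w j)) + nahmG (Real.log (w i)) = 0 := by
  intro i
  have h0 : ∀ j, (0:ℝ) < w j := fun j => (hw j).1
  have hlog : Real.log (∏ j, w j ^ a i j) = ∑ j, a i j * Real.log (w j) := by
    rw [Real.log_prod (fun j _ => ne_of_gt (Real.rpow_pos_of_pos (h0 j) _))]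
    exact Finset.sum_congr rfl fun j _ => Real.log_rpow (h0 j) _
  have h1 : Real.log (1 - w i) = ∑ j, a i j * Real.log (w j) := by
    rw [heq i, hlog]
  have h2 : nahmG (Real.log (w i)) = -Real.log (1 - w i) := by
    simp only [nahmG, Real.exp_log (h0 i)]
  rw [h2, ← h1]
  ring

/-- For a symmetric positive definite real matrix `a`, the Nahm equations
`1 - z_i = ∏_j z_j ^ (a i j)` (real powers) have a unique solution with all
`z_i ∈ (0, 1)`. -/
theorem nahm_equation_unique_solution (N : ℕ) (hN : 1 ≤ N)
    (a : Matrix (Fin N) (Fin N) ℝ) (hsym : a.IsSymm) (hpos : a.PosDef) :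
    ∃! z : Fin N → ℝ, (∀ i, z i ∈ Set.Ioo (0 : ℝ) 1) ∧
      ∀ i, 1 - z i = ∏ j, z j ^ a i j := by
  obtain ⟨u, huneg, hueq⟩ := nahm_exists hN a hsym hpos
  have hzmem : ∀ i, Real.exp (u i) ∈ Set.Ioo (0:ℝ) 1 :=
    fun i => ⟨Real.exp_pos _, Real.exp_lt_one_iff.2 (huneg i)⟩
  refine ⟨fun i => Real.exp (u i), ⟨hzmem, fun i => ?_⟩, fun w hw => ?_⟩
  · have hstep : ∀ j, Real.exp (u j) ^ a i j = Real.exp (a i j * u j) := by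
      intro j
      rw [Real.rpow_def_of_pos (Real.exp_pos _), Real.log_exp]
      ring_nf
    have hprod : ∏ j, Real.exp (u j) ^ a i j = Real.exp (∑ j, a i j * u j) := by
      rw [Real.exp_sum]
      exact Finset.prod_congr rfl fun j _ => hstep j
    have hpos1 : (0:ℝ) < 1 - Real.exp (u i) := by
      have := Real.exp_lt_one_iff.2 (huneg i); linarith
    have h1 : ∑ j, a i j * u j = Real.log (1 - Real.exp (u i)) := by
      have := hueq i
      simp only [nahmG] at this
      linarith
    rw [hprod, h1, Real.exp_log hpos1]
  · obtain ⟨hw1, hw2⟩ := hw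
    have hveq := nahm_translate a w hw1 hw2
    have hvneg : ∀ i, Real.log (w i) < 0 :=
      fun i => Real.log_neg (hw1 i).1 (hw1 i).2
    have huv : (fun i => Real.log (w i)) = u :=
      nahm_unique a hpos _ u hvneg huneg hveq hueq
    funext i
    have : Real.log (w i) = u i := congrFun huv i
    rw [← this, Real.exp_log (hw1 i).1]
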